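/- arXiv:2006.13001 — 4 statements merged into one kernel-verified Lean document; each statement's English description precedes it below -/
import Mathlib

section
/- For the complex Lorenz system X' = -κX + gY, Y' = dgX - γY + gXZ, Z' = -4g Re(conj(X)Y) - 2γZ with κ, γ > 0, g a nonzero real, and d < 0, any solution on [0,T) satisfies 4|d||X(t)|² + 4|Y(t)|² + Z(t)² ≤ exp(-2t·min{κ,γ})·(4|d||X(0)|² + 4|Y(0)|² + Z(0)²) for all t in [0,T). -/
open Real Set

private lemma hasDerivAt_re' {f : ℝ → ℂ} {f' : ℂ} {t : ℝ} (h : HasDerivAt f f' t) :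
    HasDerivAt (fun s => (f s).re) f'.re t := by
  exact (Complex.reCLM.hasFDerivAt.comp_hasDerivAt t h)

private lemma hasDerivAt_im' {f : ℝ → ℂ} {f' : ℂ} {t : ℝ} (h : HasDerivAt f f' t) :
    HasDerivAt (fun s => (f s).im) f'.im t := by
  exact (Complex.imCLM.hasFDerivAt.comp_hasDerivAt t h)

/-- Exponential decay of the Lyapunov function `4|d||X|² + 4|Y|² + Z²` for the
complex Lorenz system when `d < 0`. -/
theorem lorenz_decay_neg_d (κ γ g d T : ℝ) (X Y : ℝ → ℂ) (Z : ℝ → ℝ)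
    (hκ : 0 < κ) (hγ : 0 < γ) (hg : g ≠ 0) (hd1 : -1 < d) (hd2 : d < 0)
    (hX : ∀ t ∈ Set.Ico (0:ℝ) T,
      HasDerivAt X (-(κ:ℂ) * X t + (g:ℂ) * Y t) t)
    (hY : ∀ t ∈ Set.Ico (0:ℝ) T,
      HasDerivAt Y ((d:ℂ) * (g:ℂ) * X t - (γ:ℂ) * Y t + (g:ℂ) * X t * (Z t : ℂ)) t)
    (hZ : ∀ t ∈ Set.Ico (0:ℝ) T,
      HasDerivAt Z (-4 * g * ((starRingEnd ℂ) (X t) * Y t).re - 2 * γ * Z t) t) :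
    ∀ t ∈ Set.Ico (0:ℝ) T,
      4 * |d| * ‖X t‖ ^ 2 + 4 * ‖Y t‖ ^ 2 + Z t ^ 2 ≤
        Real.exp (-2 * t * min κ γ) *
          (4 * |d| * ‖X 0‖ ^ 2 + 4 * ‖Y 0‖ ^ 2 + Z 0 ^ 2) := by
  intro t ht
  obtain ⟨ht0, htT⟩ := ht
  set m := min κ γ with hm
  have hmκ : m ≤ κ := min_le_left _ _
  have hmγ : m ≤ γ := min_le_right _ _
  have hd' : (0:ℝ) < -d := by linarith
  set W : ℝ → ℝ := fun u => Real.exp (2*m*u) *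
    (4*(-d)*((X u).re^2 + (X u).im^2) + 4*((Y u).re^2 + (Y u).im^2) + Z u^2) with hWdef
  have key : ∀ s ∈ Ico (0:ℝ) T, HasDerivAt W
      (Real.exp (2*m*s) * (8*(-d)*(m-κ)*((X s).re^2+(X s).im^2)
        + 8*(m-γ)*((Y s).re^2+(Y s).im^2) + 2*(m-2*γ)*Z s^2)) s := by
    intro s hs
    have hxr : HasDerivAt (fun u => (X u).re) (-κ*(X s).re + g*(Y s).re) s := by
      simpa [Complex.add_re, Complex.mul_re] using hasDerivAt_re' (hX s hs)
    have hxi : HasDerivAt (fun u => (X u).im) (-κ*(X s).im + g*(Y s).im) s := by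
      simpa [Complex.add_im, Complex.mul_im] using hasDerivAt_im' (hX s hs)
    have hyr : HasDerivAt (fun u => (Y u).re)
        (d*g*(X s).re - γ*(Y s).re + g*(X s).re*Z s) s := by
      simpa [Complex.add_re, Complex.sub_re, Complex.mul_re] using hasDerivAt_re' (hY s hs)
    have hyi : HasDerivAt (fun u => (Y u).im)
        (d*g*(X s).im - γ*(Y s).im + g*(X s).im*Z s) s := by
      simpa [Complex.add_im, Complex.sub_im, Complex.mul_im] using hasDerivAt_im' (hY s hs)
    have hz : HasDerivAt Z
        (-4*g*((X s).re*(Y s).re + (X s).im*(Y s).im) - 2*γ*Z s) s := by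
      have h0 := hZ s hs
      have : ((starRingEnd ℂ) (X s) * Y s).re
          = (X s).re*(Y s).re + (X s).im*(Y s).im := by
        simp [Complex.mul_re]
      rw [this] at h0; exact h0
    have hV : HasDerivAt (fun u => 4*(-d)*((X u).re^2 + (X u).im^2)
        + 4*((Y u).re^2 + (Y u).im^2) + Z u^2)
        ((4*(-d))*((2*(X s).re^1*(-κ*(X s).re + g*(Y s).re))
            + (2*(X s).im^1*(-κ*(X s).im + g*(Y s).im)))
          + 4*((2*(Y s).re^1*(d*g*(X s).re - γ*(Y s).re + g*(X s).re*Z s))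
            + (2*(Y s).im^1*(d*g*(X s).im - γ*(Y s).im + g*(X s).im*Z s)))
          + 2*Z s^1*(-4*g*((X s).re*(Y s).re + (X s).im*(Y s).im) - 2*γ*Z s)) s :=
      ((((hxr.pow 2).add (hxi.pow 2)).const_mul (4*(-d))).add
        (((hyr.pow 2).add (hyi.pow 2)).const_mul 4)).add (hz.pow 2)
    have he : HasDerivAt (fun u => Real.exp (2*m*u)) (Real.exp (2*m*s) * (2*m)) s := by
      simpa using ((hasDerivAt_id s).const_mul (2*m)).exp
    have := he.mul hV
    refine this.congr_deriv ?_
    ring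
  have anti : AntitoneOn W (Icc 0 t) := by
    have hsub : Icc (0:ℝ) t ⊆ Ico 0 T := fun s hs => ⟨hs.1, lt_of_le_of_lt hs.2 htT⟩
    apply antitoneOn_of_deriv_nonpos (convex_Icc 0 t)
    · exact fun s hs => ((key s (hsub hs)).continuousAt).continuousWithinAt
    · rw [interior_Icc]
      exact fun s hs => ((key s ⟨hs.1.le, hs.2.trans htT⟩).differentiableAt).differentiableWithinAt
    · rw [interior_Icc]
      intro s hs
      have hsI : s ∈ Ico (0:ℝ) T := ⟨hs.1.le, hs.2.trans htT⟩
      rw [(key s hsI).deriv]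
      have hA : (0:ℝ) ≤ (X s).re^2 + (X s).im^2 := by positivity
      have hB : (0:ℝ) ≤ (Y s).re^2 + (Y s).im^2 := by positivity
      have hC : (0:ℝ) ≤ Z s^2 := sq_nonneg _
      have h1 : 8*(-d)*(m-κ)*((X s).re^2+(X s).im^2) ≤ 0 :=
        mul_nonpos_iff.mpr (Or.inr ⟨by nlinarith, hA⟩)
      have h2 : 8*(m-γ)*((Y s).re^2+(Y s).im^2) ≤ 0 :=
        mul_nonpos_iff.mpr (Or.inr ⟨by nlinarith, hB⟩)
      have h3 : 2*(m-2*γ)*Z s^2 ≤ 0 :=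
        mul_nonpos_iff.mpr (Or.inr ⟨by nlinarith, hC⟩)
      exact mul_nonpos_iff.mpr (Or.inl ⟨(Real.exp_pos _).le, by linarith⟩)
  have hWt : W t ≤ W 0 := anti ⟨le_rfl, ht0⟩ ⟨ht0, le_rfl⟩ ht0
  rw [hWdef] at hWt
  simp only [mul_zero, Real.exp_zero, one_mul] at hWt
  have habs2 : ∀ z : ℂ, ‖z‖ ^ 2 = z.re^2 + z.im^2 := by
    intro z; rw [Complex.sq_norm, Complex.normSq_apply]; ring
  simp only [habs2, abs_of_neg hd2]
  have hexp : Real.exp (-2*t*m) * Real.exp (2*m*t) = 1 := by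
    rw [← Real.exp_add]; ring_nf; exact Real.exp_zero
  calc 4*(-d)*((X t).re^2 + (X t).im^2) + 4*((Y t).re^2 + (Y t).im^2) + Z t^2
      = Real.exp (-2*t*m) * (Real.exp (2*m*t) *
        (4*(-d)*((X t).re^2 + (X t).im^2) + 4*((Y t).re^2 + (Y t).im^2) + Z t^2)) := by
        rw [← mul_assoc, hexp, one_mul]
    _ ≤ Real.exp (-2*t*m) *
        (4*(-d)*((X 0).re^2 + (X 0).im^2) + 4*((Y 0).re^2 + (Y 0).im^2) + Z 0^2) :=
        mul_le_mul_of_nonneg_left hWt (Real.exp_pos _).le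
end

section
/- For the complex Lorenz system X' = -κX + gY, Y' = dgX - γY + gXZ, Z' = -4g Re(conj(X)Y) - 2γZ with κ, γ > 0, g a nonzero real, and d ≥ 0, any solution on [0,T) satisfies |X(t)|² + (g²/(γκ))|Y(t)|² + (g²/(4γκ))Z(t)² ≤ exp(-t·min{κ - g²d/γ, γ - g²d/κ})·(|X(0)|² + (g²/(γκ))|Y(0)|² + (g²/(4γκ))Z(0)²). -/
section aux
variable (κ γ g d : ℝ)

private lemma lorenz_caseA (x1 x2 y1 y2 z : ℝ) (hκ : 0 < κ) (hγ : 0 < γ) (hd1 : 0 ≤ d)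
    (hA : (κ - γ) * (γ*κ - g^2*d) ≤ 0) :
    (γ*κ - g^2*d)*(γ*κ*(x1^2+x2^2) + g^2*(y1^2+y2^2) + g^2/4*z^2)
      - 2*γ^2*κ^2*(x1^2+x2^2) - 2*γ^2*g^2*(y1^2+y2^2) - g^2*γ^2*z^2
      + 2*γ*g*(γ*κ+g^2*d)*(x1*y1+x2*y2) ≤ 0 := by
  have hS : (0:ℝ) < γ*κ + g^2*d := by positivity
  have hm2 : γ*κ - g^2*d ≤ γ^2 := by
    rcases le_total κ γ with h | h
    · nlinarith [mul_nonneg (sq_nonneg g) hd1]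
    · nlinarith [hA, mul_nonneg (sq_nonneg g) hd1, mul_pos hγ hγ, mul_pos hγ hκ]
  have h4 : (0:ℝ) ≤ γ^2 - (γ*κ - g^2*d)/4 := by nlinarith [sq_nonneg γ]
  nlinarith [sq_nonneg (γ*κ*(γ*κ+g^2*d)*x1 - γ*g*(γ*κ+g^2*d)*y1),
    sq_nonneg (γ*κ*(γ*κ+g^2*d)*x2 - γ*g*(γ*κ+g^2*d)*y2),
    mul_nonneg (mul_nonneg (mul_nonneg (sq_nonneg g) hγ.le) (mul_nonneg hS.le (neg_nonneg.2 hA))) (sq_nonneg y1),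
    mul_nonneg (mul_nonneg (mul_nonneg (sq_nonneg g) hγ.le) (mul_nonneg hS.le (neg_nonneg.2 hA))) (sq_nonneg y2),
    mul_nonneg (mul_nonneg (mul_nonneg (mul_pos (mul_pos hγ hκ) hS).le (sq_nonneg g)) h4) (sq_nonneg z),
    mul_pos (mul_pos hγ hκ) hS]

private lemma lorenz_caseB (x1 x2 y1 y2 z : ℝ) (hκ : 0 < κ) (hγ : 0 < γ) (hg : g ≠ 0) (hd1 : 0 ≤ d)
    (hB : (γ - κ) * (γ*κ - g^2*d) ≤ 0) :
    (γ*κ - g^2*d)*(γ*κ*(x1^2+x2^2) + g^2*(y1^2+y2^2) + g^2/4*z^2)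
      - 2*γ*κ^3*(x1^2+x2^2) - 2*g^2*γ*κ*(y1^2+y2^2) - g^2*γ*κ*z^2
      + 2*g*κ*(γ*κ+g^2*d)*(x1*y1+x2*y2) ≤ 0 := by
  have hS : (0:ℝ) < γ*κ + g^2*d := by positivity
  have hg2 : (0:ℝ) < g^2 := by positivity
  have h4 : (0:ℝ) ≤ γ*κ - (γ*κ - g^2*d)/4 := by nlinarith [mul_pos hγ hκ, mul_nonneg (sq_nonneg g) hd1]
  nlinarith [sq_nonneg (g^2*(γ*κ+g^2*d)*y1 - g*κ*(γ*κ+g^2*d)*x1),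
    sq_nonneg (g^2*(γ*κ+g^2*d)*y2 - g*κ*(γ*κ+g^2*d)*x2),
    mul_nonneg (mul_nonneg (mul_nonneg (sq_nonneg g) hκ.le) (mul_nonneg hS.le (neg_nonneg.2 hB))) (sq_nonneg x1),
    mul_nonneg (mul_nonneg (mul_nonneg (sq_nonneg g) hκ.le) (mul_nonneg hS.le (neg_nonneg.2 hB))) (sq_nonneg x2),
    mul_nonneg (mul_nonneg (mul_nonneg (mul_pos hg2 hg2).le hS.le) h4) (sq_nonneg z),
    mul_pos hg2 hS]

private lemma lorenz_key (x1 x2 y1 y2 z : ℝ) (hκ : 0 < κ) (hγ : 0 < γ) (hg : g ≠ 0) (hd1 : 0 ≤ d) :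
    min (κ - g^2*d/γ) (γ - g^2*d/κ) * (x1^2+x2^2 + g^2/(γ*κ)*(y1^2+y2^2) + g^2/(4*γ*κ)*z^2)
    + ((2*x1*(-κ*x1+g*y1) + 2*x2*(-κ*x2+g*y2))
       + g^2/(γ*κ) * (2*y1*(d*g*x1 - γ*y1 + g*x1*z) + 2*y2*(d*g*x2 - γ*y2 + g*x2*z))
       + g^2/(4*γ*κ) * (2*z*(-4*g*(x1*y1+x2*y2) - 2*γ*z))) ≤ 0 := by
  have hγκ : (0:ℝ) < γ*κ := mul_pos hγ hκ
  rcases min_cases (κ - g^2*d/γ) (γ - g^2*d/κ) with ⟨hmin, h⟩ | ⟨hmin, h⟩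
  · rw [hmin]
    have hA : (κ - γ) * (γ*κ - g^2*d) ≤ 0 := by
      have h' := mul_le_mul_of_nonneg_right h hγκ.le
      have e1 : (κ - g^2*d/γ) * (γ*κ) = γ*κ^2 - g^2*d*κ := by field_simp
      have e2 : (γ - g^2*d/κ) * (γ*κ) = γ^2*κ - g^2*d*γ := by field_simp
      rw [e1, e2] at h'
      nlinarith [h']
    have hT := lorenz_caseA κ γ g d x1 x2 y1 y2 z hκ hγ hd1 hA
    have hpos : (0:ℝ) < γ^2*κ := by positivity
    have h1 : ((κ - g^2*d/γ) * (x1^2+x2^2 + g^2/(γ*κ)*(y1^2+y2^2) + g^2/(4*γ*κ)*z^2)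
      + ((2*x1*(-κ*x1+g*y1) + 2*x2*(-κ*x2+g*y2))
       + g^2/(γ*κ) * (2*y1*(d*g*x1 - γ*y1 + g*x1*z) + 2*y2*(d*g*x2 - γ*y2 + g*x2*z))
       + g^2/(4*γ*κ) * (2*z*(-4*g*(x1*y1+x2*y2) - 2*γ*z)))) * (γ^2*κ) ≤ 0 * (γ^2*κ) := by
      rw [zero_mul]
      have h0 : ((κ - g^2*d/γ) * (x1^2+x2^2 + g^2/(γ*κ)*(y1^2+y2^2) + g^2/(4*γ*κ)*z^2)
        + ((2*x1*(-κ*x1+g*y1) + 2*x2*(-κ*x2+g*y2))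
         + g^2/(γ*κ) * (2*y1*(d*g*x1 - γ*y1 + g*x1*z) + 2*y2*(d*g*x2 - γ*y2 + g*x2*z))
         + g^2/(4*γ*κ) * (2*z*(-4*g*(x1*y1+x2*y2) - 2*γ*z)))) * (γ^2*κ)
        = (γ*κ - g^2*d)*(γ*κ*(x1^2+x2^2) + g^2*(y1^2+y2^2) + g^2/4*z^2)
        - 2*γ^2*κ^2*(x1^2+x2^2) - 2*γ^2*g^2*(y1^2+y2^2) - g^2*γ^2*z^2
        + 2*γ*g*(γ*κ+g^2*d)*(x1*y1+x2*y2) := by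
        field_simp
        ring
      rw [h0]; exact hT
    exact le_of_mul_le_mul_right h1 hpos
  · rw [hmin]
    have hB : (γ - κ) * (γ*κ - g^2*d) ≤ 0 := by
      have h' := mul_le_mul_of_nonneg_right h.le hγκ.le
      have e1 : (κ - g^2*d/γ) * (γ*κ) = γ*κ^2 - g^2*d*κ := by field_simp
      have e2 : (γ - g^2*d/κ) * (γ*κ) = γ^2*κ - g^2*d*γ := by field_simp
      rw [e1, e2] at h'
      nlinarith [h']
    have hT := lorenz_caseB κ γ g d x1 x2 y1 y2 z hκ hγ hg hd1 hB
    have hpos : (0:ℝ) < γ*κ^2 := by positivity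
    have h1 : ((γ - g^2*d/κ) * (x1^2+x2^2 + g^2/(γ*κ)*(y1^2+y2^2) + g^2/(4*γ*κ)*z^2)
      + ((2*x1*(-κ*x1+g*y1) + 2*x2*(-κ*x2+g*y2))
       + g^2/(γ*κ) * (2*y1*(d*g*x1 - γ*y1 + g*x1*z) + 2*y2*(d*g*x2 - γ*y2 + g*x2*z))
       + g^2/(4*γ*κ) * (2*z*(-4*g*(x1*y1+x2*y2) - 2*γ*z)))) * (γ*κ^2) ≤ 0 * (γ*κ^2) := by
      rw [zero_mul]
      have h0 : ((γ - g^2*d/κ) * (x1^2+x2^2 + g^2/(γ*κ)*(y1^2+y2^2) + g^2/(4*γ*κ)*z^2)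
        + ((2*x1*(-κ*x1+g*y1) + 2*x2*(-κ*x2+g*y2))
         + g^2/(γ*κ) * (2*y1*(d*g*x1 - γ*y1 + g*x1*z) + 2*y2*(d*g*x2 - γ*y2 + g*x2*z))
         + g^2/(4*γ*κ) * (2*z*(-4*g*(x1*y1+x2*y2) - 2*γ*z)))) * (γ*κ^2)
        = (γ*κ - g^2*d)*(γ*κ*(x1^2+x2^2) + g^2*(y1^2+y2^2) + g^2/4*z^2)
        - 2*γ*κ^3*(x1^2+x2^2) - 2*g^2*γ*κ*(y1^2+y2^2) - g^2*γ*κ*z^2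
        + 2*g*κ*(γ*κ+g^2*d)*(x1*y1+x2*y2) := by
        field_simp
        ring
      rw [h0]; exact hT
    exact le_of_mul_le_mul_right h1 hpos

end aux

/-- Exponential decay of the Lyapunov function
`|X|² + (g²/(γκ))|Y|² + (g²/(4γκ))Z²` for the complex Lorenz system when `d ≥ 0`. -/
theorem lorenz_decay_nonneg_d (κ γ g d T : ℝ) (X Y : ℝ → ℂ) (Z : ℝ → ℝ)
    (hκ : 0 < κ) (hγ : 0 < γ) (hg : g ≠ 0) (hd1 : 0 ≤ d) (hd2 : d < 1)
    (hX : ∀ t ∈ Set.Ico (0:ℝ) T,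
      HasDerivAt X (-(κ:ℂ) * X t + (g:ℂ) * Y t) t)
    (hY : ∀ t ∈ Set.Ico (0:ℝ) T,
      HasDerivAt Y ((d:ℂ) * (g:ℂ) * X t - (γ:ℂ) * Y t + (g:ℂ) * X t * (Z t : ℂ)) t)
    (hZ : ∀ t ∈ Set.Ico (0:ℝ) T,
      HasDerivAt Z (-4 * g * ((starRingEnd ℂ) (X t) * Y t).re - 2 * γ * Z t) t) :
    ∀ t ∈ Set.Ico (0:ℝ) T,
      ‖X t‖ ^ 2 + g ^ 2 / (γ * κ) * ‖Y t‖ ^ 2 +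
          g ^ 2 / (4 * γ * κ) * Z t ^ 2 ≤
        Real.exp (-t * min (κ - g ^ 2 * d / γ) (γ - g ^ 2 * d / κ)) *
          (‖X 0‖ ^ 2 + g ^ 2 / (γ * κ) * ‖Y 0‖ ^ 2 +
            g ^ 2 / (4 * γ * κ) * Z 0 ^ 2) := by
  intro t ht
  obtain ⟨ht0, htT⟩ := ht
  set lam := min (κ - g ^ 2 * d / γ) (γ - g ^ 2 * d / κ) with hlam
  set V : ℝ → ℝ := fun s => (X s).re^2 + (X s).im^2
      + g^2/(γ*κ) * ((Y s).re^2 + (Y s).im^2) + g^2/(4*γ*κ) * (Z s)^2 with hV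
  set F : ℝ → ℝ := fun s => Real.exp (lam * s) * V s with hF
  -- pointwise derivative of F on Ico 0 T
  have hFd : ∀ s ∈ Set.Ico (0:ℝ) T, HasDerivAt F
      (Real.exp (lam * s) * lam * V s + Real.exp (lam * s) *
        ((2*(X s).re*(-κ*(X s).re+g*(Y s).re) + 2*(X s).im*(-κ*(X s).im+g*(Y s).im))
         + g^2/(γ*κ) * (2*(Y s).re*(d*g*(X s).re - γ*(Y s).re + g*(X s).re*(Z s))
                        + 2*(Y s).im*(d*g*(X s).im - γ*(Y s).im + g*(X s).im*(Z s)))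
         + g^2/(4*γ*κ) * (2*(Z s)*(-4*g*((X s).re*(Y s).re+(X s).im*(Y s).im) - 2*γ*(Z s))))) s := by
    intro s hs
    have hx := hX s hs
    have hy := hY s hs
    have hz := hZ s hs
    have hx1 : HasDerivAt (fun u => (X u).re) (-κ*(X s).re+g*(Y s).re) s := by
      have := Complex.reCLM.hasFDerivAt.comp_hasDerivAt s hx
      simpa [Function.comp_def] using this
    have hx2 : HasDerivAt (fun u => (X u).im) (-κ*(X s).im+g*(Y s).im) s := by
      have := Complex.imCLM.hasFDerivAt.comp_hasDerivAt s hx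
      simpa [Function.comp_def] using this
    have hy1 : HasDerivAt (fun u => (Y u).re) (d*g*(X s).re - γ*(Y s).re + g*(X s).re*(Z s)) s := by
      have := Complex.reCLM.hasFDerivAt.comp_hasDerivAt s hy
      simpa [Function.comp_def] using this
    have hy2 : HasDerivAt (fun u => (Y u).im) (d*g*(X s).im - γ*(Y s).im + g*(X s).im*(Z s)) s := by
      have := Complex.imCLM.hasFDerivAt.comp_hasDerivAt s hy
      simpa [Function.comp_def] using this
    have hz' : HasDerivAt Z (-4*g*((X s).re*(Y s).re+(X s).im*(Y s).im) - 2*γ*(Z s)) s := by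
      have : ((starRingEnd ℂ) (X s) * Y s).re = (X s).re*(Y s).re+(X s).im*(Y s).im := by
        simp [Complex.mul_re]
      rw [← this]
      exact hz
    have hVd : HasDerivAt V
        ((2*(X s).re*(-κ*(X s).re+g*(Y s).re) + 2*(X s).im*(-κ*(X s).im+g*(Y s).im))
         + g^2/(γ*κ) * (2*(Y s).re*(d*g*(X s).re - γ*(Y s).re + g*(X s).re*(Z s))
                        + 2*(Y s).im*(d*g*(X s).im - γ*(Y s).im + g*(X s).im*(Z s)))
         + g^2/(4*γ*κ) * (2*(Z s)*(-4*g*((X s).re*(Y s).re+(X s).im*(Y s).im) - 2*γ*(Z s)))) s := by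
      have H := (((hx1.pow 2).add (hx2.pow 2)).add
          (((hy1.pow 2).add (hy2.pow 2)).const_mul (g^2/(γ*κ)))).add
          ((hz'.pow 2).const_mul (g^2/(4*γ*κ)))
      convert H using 1
      · rfl
      · rfl
      · rfl
      ring
    have hE : HasDerivAt (fun u => Real.exp (lam * u)) (Real.exp (lam * s) * lam) s := by
      simpa using ((hasDerivAt_id s).const_mul lam).exp
    have := hE.mul hVd
    convert this using 1
    · rfl
    · rfl
    · rfl
  -- F is antitone on [0, t]
  have hsub : Set.Icc (0:ℝ) t ⊆ Set.Ico (0:ℝ) T := fun s hs =>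
    ⟨hs.1, lt_of_le_of_lt hs.2 htT⟩
  have hcont : ContinuousOn F (Set.Icc 0 t) := fun s hs =>
    ((hFd s (hsub hs)).continuousAt).continuousWithinAt
  have hdiff : DifferentiableOn ℝ F (interior (Set.Icc (0:ℝ) t)) := by
    rw [interior_Icc]
    intro s hs
    exact ((hFd s (hsub ⟨hs.1.le, hs.2.le⟩)).differentiableAt).differentiableWithinAt
  have hderiv : ∀ s ∈ interior (Set.Icc (0:ℝ) t), deriv F s ≤ 0 := by
    rw [interior_Icc]
    intro s hs
    have hD := hFd s (hsub ⟨hs.1.le, hs.2.le⟩)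
    rw [hD.deriv]
    have hkey := lorenz_key κ γ g d (X s).re (X s).im (Y s).re (Y s).im (Z s) hκ hγ hg hd1
    have h2 := mul_le_mul_of_nonneg_left hkey (Real.exp_pos (lam * s)).le
    rw [mul_zero] at h2
    simp only [hV]
    rw [hlam]
    nlinarith [h2]
  have hmono : AntitoneOn F (Set.Icc 0 t) :=
    antitoneOn_of_deriv_nonpos (convex_Icc 0 t) hcont hdiff hderiv
  have hFt : F t ≤ F 0 := hmono (Set.left_mem_Icc.2 ht0) (Set.right_mem_Icc.2 ht0) ht0
  -- unfold
  have habs : ∀ s, ‖X s‖ ^ 2 + g ^ 2 / (γ * κ) * ‖Y s‖ ^ 2 +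
      g ^ 2 / (4 * γ * κ) * Z s ^ 2 = V s := by
    intro s
    simp only [hV, Complex.sq_norm, Complex.normSq_apply]
    ring
  rw [habs t, habs 0]
  have hexp0 : Real.exp (lam * 0) = 1 := by rw [mul_zero, Real.exp_zero]
  have hFt' : Real.exp (lam * t) * V t ≤ V 0 := by
    have := hFt
    simp only [hF] at this
    rwa [hexp0, one_mul] at this
  have hpos : (0:ℝ) < Real.exp (lam * t) := Real.exp_pos _
  rw [show (-t * lam) = -(lam * t) by ring, Real.exp_neg]
  rw [inv_mul_eq_div, le_div_iff₀ hpos]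
  linarith [hFt']
end

section
/- The complex Lorenz system A' = -(κ + iω)A + gS, S' = -(γ + iω)S + gAD, D' = -4g Re(conj(A)S) - 2γ(D - d) with d ∈ (-1,1), ω ∈ ℝ, g ≠ 0, κ, γ > 0 has, for every initial condition (A(0), S(0), D(0)) ∈ ℂ × ℂ × ℝ, a unique solution defined on all of [0, ∞). -/
/-- `(A, S, D)` is a global solution of the complex Lorenz system. -/
def IsLorenzSolution (κ γ g d ω : ℝ) (A S : ℝ → ℂ) (D : ℝ → ℝ) : Prop :=
  ∀ t ≥ (0:ℝ),
    HasDerivAt A (-((κ:ℂ) + (ω:ℂ) * Complex.I) * A t + (g:ℂ) * S t) t ∧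
    HasDerivAt S (-((γ:ℂ) + (ω:ℂ) * Complex.I) * S t + (g:ℂ) * A t * (D t : ℂ)) t ∧
    HasDerivAt D (-4 * g * ((starRingEnd ℂ) (A t) * S t).re - 2 * γ * (D t - d)) t

open Set Complex Real

noncomputable section LorenzAuxSec
namespace LorenzAux

def Fv (κ γ g d ω : ℝ) (x : ℂ × ℂ × ℝ) : ℂ × ℂ × ℝ :=
  (-((κ:ℂ) + (ω:ℂ) * Complex.I) * x.1 + (g:ℂ) * x.2.1,
   -((γ:ℂ) + (ω:ℂ) * Complex.I) * x.2.1 + (g:ℂ) * x.1 * (x.2.2 : ℂ),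
   -4 * g * ((starRingEnd ℂ) x.1 * x.2.1).re - 2 * γ * (x.2.2 - d))

def Vf (x : ℂ × ℂ × ℝ) : ℝ := Complex.normSq x.1 + Complex.normSq x.2.1 + x.2.2 ^ 2 / 4

lemma contDiff_ofReal' : ContDiff ℝ 1 (fun r : ℝ => (r : ℂ)) :=
  Complex.ofRealCLM.contDiff

lemma contDiff_Fv (κ γ g d ω : ℝ) : ContDiff ℝ 1 (Fv κ γ g d ω) := by
  unfold Fv
  have h1 : ContDiff ℝ 1 (fun x : ℂ × ℂ × ℝ => ((x.2.2 : ℝ) : ℂ)) :=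
    contDiff_ofReal'.comp (contDiff_snd.comp contDiff_snd)
  have hre : ContDiff ℝ 1 (fun x : ℂ × ℂ × ℝ => ((starRingEnd ℂ) x.1 * x.2.1).re) := by
    have : (fun x : ℂ × ℂ × ℝ => ((starRingEnd ℂ) x.1 * x.2.1).re)
        = fun x : ℂ × ℂ × ℝ => x.1.re * x.2.1.re + x.1.im * x.2.1.im := by
      funext x; simp [Complex.mul_re]
    rw [this]
    have hr : ContDiff ℝ 1 (fun z : ℂ => z.re) := Complex.reCLM.contDiff
    have hi : ContDiff ℝ 1 (fun z : ℂ => z.im) := Complex.imCLM.contDiff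
    fun_prop
  fun_prop

lemma contDiff_Vf : ContDiff ℝ 1 Vf := by
  have : Vf = fun x : ℂ × ℂ × ℝ =>
      (x.1.re ^ 2 + x.1.im ^ 2) + (x.2.1.re ^ 2 + x.2.1.im ^ 2) + x.2.2 ^ 2 * (4:ℝ)⁻¹ := by
    funext x; simp [Vf, Complex.normSq_apply]; ring
  rw [this]
  have hr : ContDiff ℝ 1 (fun z : ℂ => z.re) := Complex.reCLM.contDiff
  have hi : ContDiff ℝ 1 (fun z : ℂ => z.im) := Complex.imCLM.contDiff
  fun_prop


variable {x : ℝ → ℂ × ℂ × ℝ} {x' : ℂ × ℂ × ℝ} {u : Set ℝ} {t : ℝ}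

lemma hasDerivWithinAt_fst (h : HasDerivWithinAt x x' u t) :
    HasDerivWithinAt (fun s => (x s).1) x'.1 u t := by
  exact (ContinuousLinearMap.fst ℝ ℂ (ℂ × ℝ)).hasFDerivAt.comp_hasDerivWithinAt t h

lemma hasDerivWithinAt_snd1 (h : HasDerivWithinAt x x' u t) :
    HasDerivWithinAt (fun s => (x s).2.1) x'.2.1 u t := by
  exact ((ContinuousLinearMap.fst ℝ ℂ ℝ).comp
    (ContinuousLinearMap.snd ℝ ℂ (ℂ × ℝ))).hasFDerivAt.comp_hasDerivWithinAt t h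

lemma hasDerivWithinAt_snd2 (h : HasDerivWithinAt x x' u t) :
    HasDerivWithinAt (fun s => (x s).2.2) x'.2.2 u t := by
  exact ((ContinuousLinearMap.snd ℝ ℂ ℝ).comp
    (ContinuousLinearMap.snd ℝ ℂ (ℂ × ℝ))).hasFDerivAt.comp_hasDerivWithinAt t h

lemma hasDerivWithinAt_re {f : ℝ → ℂ} {f' : ℂ} (h : HasDerivWithinAt f f' u t) :
    HasDerivWithinAt (fun s => (f s).re) f'.re u t := by
  exact Complex.reCLM.hasFDerivAt.comp_hasDerivWithinAt t h

lemma hasDerivWithinAt_im {f : ℝ → ℂ} {f' : ℂ} (h : HasDerivWithinAt f f' u t) :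
    HasDerivWithinAt (fun s => (f s).im) f'.im u t := by
  exact Complex.imCLM.hasFDerivAt.comp_hasDerivWithinAt t h

lemma hasDerivWithinAt_Vf_comp (h : HasDerivWithinAt x x' u t) :
    HasDerivWithinAt (fun s => Vf (x s))
      (2 * ((starRingEnd ℂ) (x t).1 * x'.1).re + 2 * ((starRingEnd ℂ) (x t).2.1 * x'.2.1).re
        + (x t).2.2 * x'.2.2 / 2) u t := by
  have h1 := hasDerivWithinAt_re (hasDerivWithinAt_fst h)
  have h2 := hasDerivWithinAt_im (hasDerivWithinAt_fst h)
  have h3 := hasDerivWithinAt_re (hasDerivWithinAt_snd1 h)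
  have h4 := hasDerivWithinAt_im (hasDerivWithinAt_snd1 h)
  have h5 := hasDerivWithinAt_snd2 h
  have key := (((h1.mul h1).add (h2.mul h2)).add ((h3.mul h3).add (h4.mul h4))).add
      ((h5.mul h5).div_const 4)
  have hfun : (fun y => (x y).1.re * (x y).1.re + (x y).1.im * (x y).1.im
      + ((x y).2.1.re * (x y).2.1.re + (x y).2.1.im * (x y).2.1.im)
      + (x y).2.2 * (x y).2.2 / 4) = fun s => Vf (x s) := by
    funext y; simp [Vf, Complex.normSq_apply]; ring
  rw [← hfun]
  refine key.congr_deriv ?_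
  simp [Complex.mul_re]
  ring


lemma deriv_eq (κ γ g d ω φ : ℝ) (p : ℂ × ℂ × ℝ) :
    2 * ((starRingEnd ℂ) p.1 * (φ • Fv κ γ g d ω p).1).re
      + 2 * ((starRingEnd ℂ) p.2.1 * (φ • Fv κ γ g d ω p).2.1).re
      + p.2.2 * (φ • Fv κ γ g d ω p).2.2 / 2
    = φ * (-2*κ*Complex.normSq p.1 - 2*γ*Complex.normSq p.2.1
        + 2*g*((starRingEnd ℂ) p.1 * p.2.1).re - γ*p.2.2^2 + γ*d*p.2.2) := by
  simp only [Fv, Prod.smul_fst, Prod.smul_snd, Complex.real_smul, smul_eq_mul,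
    Complex.normSq_apply, Complex.mul_re, Complex.mul_im, Complex.conj_re, Complex.conj_im,
    Complex.add_re, Complex.add_im, Complex.neg_re, Complex.neg_im, Complex.ofReal_re,
    Complex.ofReal_im, Complex.I_re, Complex.I_im, Complex.mul_re, Complex.mul_im]
  ring

lemma e_le (hγ : 0 < γ) (hκ : 0 < κ) (g d : ℝ) (hd1 : -1 < d) (hd2 : d < 1)
    (φ : ℝ) (hφ0 : 0 ≤ φ) (hφ1 : φ ≤ 1) (p : ℂ × ℂ × ℝ) :
    φ * (-2*κ*Complex.normSq p.1 - 2*γ*Complex.normSq p.2.1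
        + 2*g*((starRingEnd ℂ) p.1 * p.2.1).re - γ*p.2.2^2 + γ*d*p.2.2)
      ≤ (2*|g| + 4*γ) * Vf p + γ := by
  set nA := Complex.normSq p.1 with hnA
  set nS := Complex.normSq p.2.1 with hnS
  set r := ((starRingEnd ℂ) p.1 * p.2.1).re with hr
  set D := p.2.2 with hD
  have hnA0 : 0 ≤ nA := Complex.normSq_nonneg _
  have hnS0 : 0 ≤ nS := Complex.normSq_nonneg _
  have hr2 : r ^ 2 ≤ nA * nS := by
    have h1 : r ^ 2 ≤ Complex.normSq ((starRingEnd ℂ) p.1 * p.2.1) := by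
      rw [Complex.normSq_apply]; nlinarith [sq_nonneg (((starRingEnd ℂ) p.1 * p.2.1).im)]
    simpa [Complex.normSq_mul, Complex.normSq_conj] using h1
  have habs : 2 * |r| ≤ nA + nS := by
    nlinarith [_root_.sq_abs r, sq_nonneg (nA - nS), abs_nonneg r, sq_nonneg (nA + nS - 2 * |r|),
      sq_nonneg (nA + nS + 2 * |r|)]
  have hgr : 2 * g * r ≤ |g| * (nA + nS) := by
    calc 2 * g * r ≤ |2 * g * r| := le_abs_self _
    _ = |g| * (2 * |r|) := by rw [abs_mul, abs_mul]; simp [_root_.abs_of_nonneg]; ring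
    _ ≤ |g| * (nA + nS) := by
        exact mul_le_mul_of_nonneg_left habs (abs_nonneg g)
  have hdD : d * D ≤ (1 + D^2) / 2 := by nlinarith [sq_nonneg (d - D)]
  have he : (-2*κ*nA - 2*γ*nS + 2*g*r - γ*D^2 + γ*d*D) ≤ (2*|g| + 4*γ) * Vf p + γ := by
    have hV : Vf p = nA + nS + D^2/4 := rfl
    rw [hV]
    nlinarith [abs_nonneg g, sq_nonneg D]
  have hrhs : 0 ≤ (2*|g| + 4*γ) * Vf p + γ := by
    have hV0 : 0 ≤ Vf p := by
      have : Vf p = nA + nS + D^2/4 := rfl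
      nlinarith [sq_nonneg D]
    have : 0 ≤ 2*|g| + 4*γ := by positivity
    nlinarith
  rcases le_or_gt (-2*κ*nA - 2*γ*nS + 2*g*r - γ*D^2 + γ*d*D) 0 with h | h
  · nlinarith
  · nlinarith


/-- cutoff vector field -/
def cutF (κ γ g d ω M : ℝ) (x : ℂ × ℂ × ℝ) : ℂ × ℂ × ℝ :=
  (1 - Real.smoothTransition (Vf x - M)) • Fv κ γ g d ω x

lemma contDiff_cutF (κ γ g d ω M : ℝ) : ContDiff ℝ 1 (cutF κ γ g d ω M) := by
  unfold cutF
  exact ((contDiff_const.sub (Real.smoothTransition.contDiff.comp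
    (contDiff_Vf.sub contDiff_const)))).smul (contDiff_Fv κ γ g d ω)

lemma cutF_eq (κ γ g d ω M : ℝ) {x : ℂ × ℂ × ℝ} (h : Vf x ≤ M) :
    cutF κ γ g d ω M x = Fv κ γ g d ω x := by
  unfold cutF
  rw [Real.smoothTransition.zero_of_nonpos (by linarith)]
  simp

lemma Vf_nonneg (x : ℂ × ℂ × ℝ) : 0 ≤ Vf x := by
  have := Complex.normSq_nonneg x.1
  have := Complex.normSq_nonneg x.2.1
  have := sq_nonneg x.2.2
  unfold Vf; linarith

lemma sublevel_subset (c : ℝ) :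
    {x : ℂ × ℂ × ℝ | Vf x ≤ c} ⊆ Metric.closedBall 0 (2 * Real.sqrt (max c 0)) := by
  intro x hx
  simp only [Metric.mem_closedBall, dist_zero_right]
  set ρ := 2 * Real.sqrt (max c 0) with hρ
  have hρ0 : 0 ≤ ρ := by positivity
  have hc0 : Vf x ≤ max c 0 := le_trans hx (le_max_left _ _)
  have hρ2 : max c 0 ≤ ρ ^ 2 / 4 + max c 0 - max c 0 + max c 0 := by
    have : Real.sqrt (max c 0) ^ 2 = max c 0 := Real.sq_sqrt (le_max_right _ _)
    nlinarith [this]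
  have hsq : ∀ y : ℝ, 0 ≤ y → y ^ 2 ≤ ρ ^ 2 → y ≤ ρ := by
    intro y hy h2
    nlinarith
  have hn1 : ‖x.1‖ ≤ ρ := by
    apply hsq _ (norm_nonneg _)
    have h1 : ‖x.1‖ ^ 2 = Complex.normSq x.1 := Complex.sq_norm x.1
    have h2 : Complex.normSq x.1 ≤ max c 0 := by
      have := Complex.normSq_nonneg x.2.1; have := sq_nonneg x.2.2
      unfold Vf at hc0; linarith
    have h3 : Real.sqrt (max c 0) ^ 2 = max c 0 := Real.sq_sqrt (le_max_right _ _)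
    nlinarith [Real.sqrt_nonneg (max c 0)]
  have hn2 : ‖x.2.1‖ ≤ ρ := by
    apply hsq _ (norm_nonneg _)
    have h1 : ‖x.2.1‖ ^ 2 = Complex.normSq x.2.1 := Complex.sq_norm x.2.1
    have h2 : Complex.normSq x.2.1 ≤ max c 0 := by
      have := Complex.normSq_nonneg x.1; have := sq_nonneg x.2.2
      unfold Vf at hc0; linarith
    have h3 : Real.sqrt (max c 0) ^ 2 = max c 0 := Real.sq_sqrt (le_max_right _ _)
    nlinarith [Real.sqrt_nonneg (max c 0)]
  have hn3 : ‖x.2.2‖ ≤ ρ := by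
    apply hsq _ (norm_nonneg _)
    have h1 : ‖x.2.2‖ ^ 2 = x.2.2 ^ 2 := _root_.sq_abs x.2.2
    have h2 : x.2.2 ^ 2 / 4 ≤ max c 0 := by
      have := Complex.normSq_nonneg x.1; have := Complex.normSq_nonneg x.2.1
      unfold Vf at hc0; linarith
    have h3 : Real.sqrt (max c 0) ^ 2 = max c 0 := Real.sq_sqrt (le_max_right _ _)
    nlinarith [Real.sqrt_nonneg (max c 0)]
  calc ‖x‖ = max ‖x.1‖ (max ‖x.2.1‖ ‖x.2.2‖) := by
        rw [Prod.norm_def, Prod.norm_def]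
  _ ≤ ρ := by
        simp only [max_le_iff]
        exact ⟨hn1, hn2, hn3⟩

lemma hasCompactSupport_cutF (κ γ g d ω M : ℝ) : HasCompactSupport (cutF κ γ g d ω M) := by
  apply IsCompact.of_isClosed_subset
    (isCompact_closedBall (0 : ℂ × ℂ × ℝ) (2 * Real.sqrt (max (M + 1) 0)))
    (isClosed_tsupport _)
  apply closure_minimal _ Metric.isClosed_closedBall
  intro x hx
  apply sublevel_subset (M + 1)
  by_contra hc
  simp only [mem_setOf_eq, not_le] at hc
  apply hx
  unfold cutF
  rw [Real.smoothTransition.one_of_one_le (by linarith)]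
  simp

lemma exists_lipschitz_cutF (κ γ g d ω M : ℝ) :
    ∃ L : NNReal, LipschitzWith L (cutF κ γ g d ω M) :=
  ContDiff.lipschitzWith_of_hasCompactSupport (hasCompactSupport_cutF κ γ g d ω M)
    (contDiff_cutF κ γ g d ω M) one_ne_zero

lemma exists_bound_cutF (κ γ g d ω M : ℝ) :
    ∃ C : ℝ, ∀ x, ‖cutF κ γ g d ω M x‖ ≤ C :=
  (hasCompactSupport_cutF κ γ g d ω M).exists_bound_of_continuous
    (contDiff_cutF κ γ g d ω M).continuous

lemma exists_sol (κ γ g d ω M T : ℝ) (hT : 0 ≤ T) (x₀ : ℂ × ℂ × ℝ) :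
    ∃ sol : ℝ → ℂ × ℂ × ℝ, sol 0 = x₀ ∧
      ∀ t ∈ Icc (-T) T, HasDerivWithinAt sol (cutF κ γ g d ω M (sol t)) (Icc (-T) T) t := by
  obtain ⟨L, hL⟩ := exists_lipschitz_cutF κ γ g d ω M
  obtain ⟨C, hC⟩ := exists_bound_cutF κ γ g d ω M
  have hC0 : 0 ≤ C := le_trans (norm_nonneg _) (hC 0)
  have hpl : IsPicardLindelof (fun _ x => cutF κ γ g d ω M x) (tmin := -T) (tmax := T)
      ⟨0, by constructor <;> linarith⟩ x₀ (⟨C, hC0⟩ * ⟨T, hT⟩) 0 ⟨C, hC0⟩ L :=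
    { lipschitzOnWith := fun _ _ => hL.lipschitzOnWith
      continuousOn := fun x _ => continuousOn_const
      norm_le := fun t _ x _ => hC x
      mul_max_le := by
        simp only [sub_zero, zero_sub, neg_neg, max_self, NNReal.coe_mul, NNReal.coe_mk,
          NNReal.coe_zero, tsub_zero]
        exact le_rfl }
  exact hpl.exists_eq_forall_mem_Icc_hasDerivWithinAt₀


lemma apriori {κ γ : ℝ} (g d ω : ℝ) (hγ : 0 < γ) (hκ : 0 < κ) (hd1 : -1 < d) (hd2 : d < 1)
    (T : ℝ) (x : ℝ → ℂ × ℂ × ℝ) (φ : ℝ → ℝ)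
    (hφ : ∀ t ∈ Ico 0 T, φ t ∈ Icc (0:ℝ) 1)
    (hc : ContinuousOn x (Icc 0 T))
    (hx : ∀ t ∈ Ico 0 T, HasDerivWithinAt x (φ t • Fv κ γ g d ω (x t)) (Ici t) t) :
    ∀ t ∈ Icc 0 T, Vf (x t) ≤ gronwallBound (Vf (x 0)) (2*|g|+4*γ) γ t := by
  intro t ht
  have main := le_gronwallBound_of_liminf_deriv_right_le
    (f := fun s => Vf (x s))
    (f' := fun s => φ s * (-2*κ*Complex.normSq (x s).1 - 2*γ*Complex.normSq (x s).2.1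
        + 2*g*((starRingEnd ℂ) (x s).1 * (x s).2.1).re - γ*(x s).2.2^2 + γ*d*(x s).2.2))
    (δ := Vf (x 0)) (K := 2*|g|+4*γ) (ε := γ) (a := 0) (b := T)
    (contDiff_Vf.continuous.comp_continuousOn hc)
    (fun s hs r hr => by
      have hd : HasDerivWithinAt (fun s => Vf (x s))
          (φ s * (-2*κ*Complex.normSq (x s).1 - 2*γ*Complex.normSq (x s).2.1
            + 2*g*((starRingEnd ℂ) (x s).1 * (x s).2.1).re - γ*(x s).2.2^2 + γ*d*(x s).2.2))
          (Ici s) s := by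
        have := hasDerivWithinAt_Vf_comp (hx s hs)
        rwa [deriv_eq κ γ g d ω (φ s) (x s)] at this
      exact hd.liminf_right_slope_le hr)
    le_rfl
    (fun s hs => e_le hγ hκ g d hd1 hd2 (φ s) (hφ s hs).1 (hφ s hs).2 (x s))
    t ht
  simpa using main

lemma gB_mono {δ K ε : ℝ} (hδ : 0 ≤ δ) (hK : 0 < K) (hε : 0 ≤ ε) {s t : ℝ} (hst : s ≤ t) :
    gronwallBound δ K ε s ≤ gronwallBound δ K ε t := by
  rw [gronwallBound_of_K_ne_0 hK.ne']
  dsimp only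
  have h := Real.exp_le_exp.2 (mul_le_mul_of_nonneg_left hst hK.le)
  have h2 : 0 ≤ ε / K := by positivity
  nlinarith [Real.exp_pos (K * s)]

lemma uniq {κ γ : ℝ} (g d ω : ℝ) (hγ : 0 < γ) (hκ : 0 < κ) (hd1 : -1 < d) (hd2 : d < 1)
    (T : ℝ) (hT : 0 ≤ T) (x y : ℝ → ℂ × ℂ × ℝ)
    (hxc : ContinuousOn x (Icc 0 T))
    (hx : ∀ t ∈ Ico 0 T, HasDerivWithinAt x (Fv κ γ g d ω (x t)) (Ici t) t)
    (hyc : ContinuousOn y (Icc 0 T))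
    (hy : ∀ t ∈ Ico 0 T, HasDerivWithinAt y (Fv κ γ g d ω (y t)) (Ici t) t)
    (h0 : x 0 = y 0) : EqOn x y (Icc 0 T) := by
  set M := gronwallBound (Vf (x 0)) (2*|g|+4*γ) γ T with hM
  have hone : ∀ (z : ℝ → ℂ × ℂ × ℝ),
      (∀ t ∈ Ico 0 T, HasDerivWithinAt z (Fv κ γ g d ω (z t)) (Ici t) t) →
      ∀ t ∈ Ico 0 T, HasDerivWithinAt z ((1:ℝ) • Fv κ γ g d ω (z t)) (Ici t) t := by
    intro z hz t ht; rw [one_smul]; exact hz t ht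
  have hbx : ∀ t ∈ Icc 0 T, Vf (x t) ≤ M := by
    intro t ht
    refine le_trans (apriori g d ω hγ hκ hd1 hd2 T x (fun _ => 1)
      (fun _ _ => ⟨zero_le_one, le_rfl⟩) hxc (hone x hx) t ht) ?_
    exact gB_mono (Vf_nonneg _) (by positivity) hγ.le ht.2
  have hby : ∀ t ∈ Icc 0 T, Vf (y t) ≤ M := by
    intro t ht
    refine le_trans (apriori g d ω hγ hκ hd1 hd2 T y (fun _ => 1)
      (fun _ _ => ⟨zero_le_one, le_rfl⟩) hyc (hone y hy) t ht) ?_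
    rw [← h0]
    exact gB_mono (Vf_nonneg _) (by positivity) hγ.le ht.2
  obtain ⟨L, hL⟩ := exists_lipschitz_cutF κ γ g d ω M
  have hLip : LipschitzOnWith L (Fv κ γ g d ω) {p | Vf p ≤ M} := by
    intro p hp q hq
    rw [← cutF_eq κ γ g d ω M hp, ← cutF_eq κ γ g d ω M hq]
    exact hL _ _
  exact ODE_solution_unique_of_mem_Icc_right (v := fun _ p => Fv κ γ g d ω p)
    (s := fun _ => {p | Vf p ≤ M}) (fun _ _ => hLip)
    hxc hx (fun t ht => hbx t (Ico_subset_Icc_self ht))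
    hyc hy (fun t ht => hby t (Ico_subset_Icc_self ht)) h0


/-- Main construction: a global solution to the true system, plus uniqueness. -/
theorem global_sol (κ γ g d ω : ℝ)
    (hκ : 0 < κ) (hγ : 0 < γ) (hd1 : -1 < d) (hd2 : d < 1) (x₀ : ℂ × ℂ × ℝ) :
    ∃ α : ℝ → ℂ × ℂ × ℝ, α 0 = x₀ ∧ ∀ t ≥ (0:ℝ), HasDerivAt α (Fv κ γ g d ω (α t)) t := by
  classical
  have hsolex : ∀ n : ℕ, ∃ sol : ℝ → ℂ × ℂ × ℝ, sol 0 = x₀ ∧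
      ∀ t ∈ Icc (-((n:ℝ)+1)) ((n:ℝ)+1),
        HasDerivWithinAt sol
          (cutF κ γ g d ω (gronwallBound (Vf x₀) (2*|g|+4*γ) γ ((n:ℝ)+1)) (sol t))
          (Icc (-((n:ℝ)+1)) ((n:ℝ)+1)) t := by
    intro n
    exact exists_sol κ γ g d ω (gronwallBound (Vf x₀) (2*|g|+4*γ) γ ((n:ℝ)+1)) ((n:ℝ)+1)
      (by positivity) x₀
  choose sol h0 hds using hsolex
  -- continuity
  have hcont : ∀ n : ℕ, ContinuousOn (sol n) (Icc (-((n:ℝ)+1)) ((n:ℝ)+1)) :=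
    fun n t ht => (hds n t ht).continuousWithinAt
  have hcont' : ∀ n : ℕ, ContinuousOn (sol n) (Icc 0 ((n:ℝ)+1)) :=
    fun n => (hcont n).mono (Icc_subset_Icc (neg_nonpos.mpr (by positivity)) le_rfl)
  -- right derivatives within Ici, with cutoff field
  have hcut : ∀ n : ℕ, ∀ t ∈ Ico (0:ℝ) ((n:ℝ)+1),
      HasDerivWithinAt (sol n)
        (cutF κ γ g d ω (gronwallBound (Vf x₀) (2*|g|+4*γ) γ ((n:ℝ)+1)) (sol n t)) (Ici t) t := by
    intro n t ht
    have hmem : Icc (-((n:ℝ)+1)) ((n:ℝ)+1) ∈ nhdsWithin t (Ici t) := by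
      apply mem_nhdsWithin.2
      refine ⟨Iio ((n:ℝ)+1), isOpen_Iio, ht.2, ?_⟩
      intro s hs
      exact ⟨by simp only [mem_inter_iff, mem_Iio, mem_Ici] at hs; linarith [ht.1, hs.2], hs.1.le⟩
    exact (hds n t ⟨by linarith [ht.1], ht.2.le⟩).mono_of_mem_nhdsWithin hmem
  -- a priori bound
  have hbound : ∀ n : ℕ, ∀ t ∈ Icc (0:ℝ) ((n:ℝ)+1),
      Vf (sol n t) ≤ gronwallBound (Vf x₀) (2*|g|+4*γ) γ ((n:ℝ)+1) := by
    intro n t ht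
    have hle1 : ∀ y : ℝ, Real.smoothTransition y ≤ 1 := Real.smoothTransition.le_one
    have hge0 : ∀ y : ℝ, 0 ≤ Real.smoothTransition y := Real.smoothTransition.nonneg
    have hap := apriori (κ := κ) g d ω hγ hκ hd1 hd2 ((n:ℝ)+1) (sol n)
      (fun s => 1 - Real.smoothTransition
        (Vf (sol n s) - gronwallBound (Vf x₀) (2*|g|+4*γ) γ ((n:ℝ)+1)))
      (fun s _ => ⟨by linarith [hle1 (Vf (sol n s)
          - gronwallBound (Vf x₀) (2*|g|+4*γ) γ ((n:ℝ)+1))],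
        by linarith [hge0 (Vf (sol n s)
          - gronwallBound (Vf x₀) (2*|g|+4*γ) γ ((n:ℝ)+1))]⟩)
      (hcont' n)
      (fun s hs => by simpa [cutF] using hcut n s hs)
      t ht
    rw [h0 n] at hap
    exact le_trans hap (gB_mono (Vf_nonneg _) (by positivity) hγ.le ht.2)
  -- true right derivatives
  have htrue : ∀ n : ℕ, ∀ t ∈ Ico (0:ℝ) ((n:ℝ)+1),
      HasDerivWithinAt (sol n) (Fv κ γ g d ω (sol n t)) (Ici t) t := by
    intro n t ht
    have := hcut n t ht
    rwa [cutF_eq κ γ g d ω _ (hbound n t ⟨ht.1, ht.2.le⟩)] at this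
  -- true full derivatives
  have hcd : ∀ n : ℕ, ∀ t ∈ Ico (0:ℝ) ((n:ℝ)+1),
      HasDerivAt (sol n) (Fv κ γ g d ω (sol n t)) t := by
    intro n t ht
    have h1 := (hds n t ⟨by linarith [ht.1], ht.2.le⟩).hasDerivAt
      (Icc_mem_nhds (by linarith [ht.1]) ht.2)
    rwa [cutF_eq κ γ g d ω _ (hbound n t ⟨ht.1, ht.2.le⟩)] at h1
  -- consistency
  have hagree : ∀ n m : ℕ, ∀ t : ℝ, 0 ≤ t → t ≤ (n:ℝ)+1 → t ≤ (m:ℝ)+1 →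
      sol n t = sol m t := by
    intro n m t ht0 htn htm
    set T := min ((n:ℝ)+1) ((m:ℝ)+1) with hT
    have hT0 : 0 ≤ T := le_min (by positivity) (by positivity)
    have := uniq (κ := κ) g d ω hγ hκ hd1 hd2 T hT0 (sol n) (sol m)
      ((hcont' n).mono (Icc_subset_Icc le_rfl (min_le_left _ _)))
      (fun s hs => htrue n s ⟨hs.1, lt_of_lt_of_le hs.2 (min_le_left _ _)⟩)
      ((hcont' m).mono (Icc_subset_Icc le_rfl (min_le_right _ _)))
      (fun s hs => htrue m s ⟨hs.1, lt_of_lt_of_le hs.2 (min_le_right _ _)⟩)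
      (by rw [h0 n, h0 m])
    exact this ⟨ht0, le_min htn htm⟩
  -- glued solution
  set α : ℝ → ℂ × ℂ × ℝ := fun t => sol (⌈max t 0⌉₊) t with hα
  have hα_eq : ∀ (n : ℕ) (s : ℝ), 0 ≤ s → s ≤ (n:ℝ)+1 → α s = sol n s := by
    intro n s hs0 hsn
    apply hagree _ n s hs0 _ hsn
    have h1 : s ≤ (⌈max s 0⌉₊ : ℝ) := le_trans (le_max_left s 0) (Nat.le_ceil _)
    linarith
  have hα_neg : ∀ s : ℝ, s ≤ 0 → α s = sol 0 s := by
    intro s hs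
    have : max s 0 = 0 := max_eq_right hs
    simp only [hα, this, Nat.ceil_zero]
  have hα0 : α 0 = x₀ := by rw [hα_neg 0 le_rfl, h0 0]
  refine ⟨α, hα0, ?_⟩
  intro t ht
  rcases eq_or_lt_of_le ht with heq | hpos
  · -- t = 0
    have hev : α =ᶠ[nhds (0:ℝ)] sol 0 := by
      filter_upwards [Iio_mem_nhds (show (0:ℝ) < 1 by norm_num)] with s hs
      rcases le_or_gt s 0 with h | h
      · exact hα_neg s h
      · exact hα_eq 0 s h.le (by simpa using (le_of_lt hs))
    have hd0 : HasDerivAt (sol 0) (Fv κ γ g d ω (sol 0 0)) 0 :=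
      hcd 0 0 ⟨le_rfl, by norm_num⟩
    rw [← heq]
    have := hd0.congr_of_eventuallyEq hev
    rwa [show sol 0 0 = α 0 by rw [hα_neg 0 le_rfl]] at this
  · -- t > 0
    set N := ⌈max t 0⌉₊ with hN
    have htN : t ≤ (N:ℝ) := le_trans (le_max_left t 0) (Nat.le_ceil _)
    have hev : α =ᶠ[nhds t] sol N := by
      filter_upwards [Ioo_mem_nhds hpos (show t < (N:ℝ)+1 by linarith)] with s hs
      exact hα_eq N s hs.1.le hs.2.le
    have hdN : HasDerivAt (sol N) (Fv κ γ g d ω (sol N t)) t :=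
      hcd N t ⟨ht, by linarith⟩
    have := hdN.congr_of_eventuallyEq hev
    rwa [show sol N t = α t from (hα_eq N t ht (by linarith)).symm] at this


lemma hasDerivAt_comp_fst {x : ℝ → ℂ × ℂ × ℝ} {x' : ℂ × ℂ × ℝ} {t : ℝ}
    (h : HasDerivAt x x' t) : HasDerivAt (fun s => (x s).1) x'.1 t := by
  exact (ContinuousLinearMap.fst ℝ ℂ (ℂ × ℝ)).hasFDerivAt.comp_hasDerivAt t h

lemma hasDerivAt_comp_snd1 {x : ℝ → ℂ × ℂ × ℝ} {x' : ℂ × ℂ × ℝ} {t : ℝ}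
    (h : HasDerivAt x x' t) : HasDerivAt (fun s => (x s).2.1) x'.2.1 t := by
  exact ((ContinuousLinearMap.fst ℝ ℂ ℝ).comp
    (ContinuousLinearMap.snd ℝ ℂ (ℂ × ℝ))).hasFDerivAt.comp_hasDerivAt t h

lemma hasDerivAt_comp_snd2 {x : ℝ → ℂ × ℂ × ℝ} {x' : ℂ × ℂ × ℝ} {t : ℝ}
    (h : HasDerivAt x x' t) : HasDerivAt (fun s => (x s).2.2) x'.2.2 t := by
  exact ((ContinuousLinearMap.snd ℝ ℂ ℝ).comp
    (ContinuousLinearMap.snd ℝ ℂ (ℂ × ℝ))).hasFDerivAt.comp_hasDerivAt t h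

end LorenzAux
end LorenzAuxSec

/-- Global existence and uniqueness for the complex Lorenz system: for every
initial condition there is a unique solution defined on all of `[0, ∞)`. -/
theorem lorenz_global_existence_uniqueness (κ γ g d ω : ℝ)
    (hκ : 0 < κ) (hγ : 0 < γ) (hg : g ≠ 0) (hd1 : -1 < d) (hd2 : d < 1)
    (A0 S0 : ℂ) (D0 : ℝ) :
    ∃ (A S : ℝ → ℂ) (D : ℝ → ℝ),
      (A 0 = A0 ∧ S 0 = S0 ∧ D 0 = D0 ∧ IsLorenzSolution κ γ g d ω A S D) ∧
      ∀ (A' S' : ℝ → ℂ) (D' : ℝ → ℝ),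
        (A' 0 = A0 ∧ S' 0 = S0 ∧ D' 0 = D0 ∧ IsLorenzSolution κ γ g d ω A' S' D') →
        ∀ t ≥ (0:ℝ), A' t = A t ∧ S' t = S t ∧ D' t = D t := by
  classical
  open LorenzAux in
  obtain ⟨α, hα0, hα⟩ := LorenzAux.global_sol κ γ g d ω hκ hγ hd1 hd2 (A0, S0, D0)
  refine ⟨fun t => (α t).1, fun t => (α t).2.1, fun t => (α t).2.2,
    ⟨by simp [hα0], by simp [hα0], by simp [hα0], ?_⟩, ?_⟩
  · -- solution property
    intro t ht
    refine ⟨?_, ?_, ?_⟩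
    · simpa [LorenzAux.Fv] using LorenzAux.hasDerivAt_comp_fst (hα t ht)
    · simpa [LorenzAux.Fv] using LorenzAux.hasDerivAt_comp_snd1 (hα t ht)
    · simpa [LorenzAux.Fv] using LorenzAux.hasDerivAt_comp_snd2 (hα t ht)
  · -- uniqueness
    rintro A' S' D' ⟨hA0, hS0, hD0, hsol⟩ t ht
    set y : ℝ → ℂ × ℂ × ℝ := fun s => (A' s, S' s, D' s) with hy
    have hyd : ∀ s ≥ (0:ℝ), HasDerivAt y (LorenzAux.Fv κ γ g d ω (y s)) s := by
      intro s hs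
      obtain ⟨h1, h2, h3⟩ := hsol s hs
      have := h1.prodMk (h2.prodMk h3)
      simpa [LorenzAux.Fv, hy] using this
    have heq := LorenzAux.uniq (κ := κ) g d ω hγ hκ hd1 hd2 t ht y α
      (fun s hs => (hyd s hs.1).continuousAt.continuousWithinAt)
      (fun s hs => (hyd s hs.1).hasDerivWithinAt)
      (fun s hs => (hα s hs.1).continuousAt.continuousWithinAt)
      (fun s hs => (hα s hs.1).hasDerivWithinAt)
      (by rw [hα0]; simp only [hy]; rw [hA0, hS0, hD0])
    have h := heq (right_mem_Icc.2 ht)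
    exact ⟨congrArg Prod.fst h, congrArg (fun p => p.2.1) h, congrArg (fun p => p.2.2) h⟩
end

section
/- If g²d < κγ (with κ, γ > 0, g ≠ 0, d ∈ (-1,1)), then for any solution of the complex Lorenz system A' = -(κ + iω)A + gS, S' = -(γ + iω)S + gAD, D' = -4g Re(conj(A)S) - 2γ(D - d), the quantities A(t), S(t), and D(t) - d converge to 0 exponentially fast as t → ∞. -/
private lemma key_ineq (κ γ g d ω lam c a1 a2 s1 s2 Dt : ℝ)
    (hc0 : 0 ≤ c) (_hcκ : c < κ) (hcγ : c < γ) (_hlam : 0 < lam)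
    (hm : (g*(lam+d))^2 ≤ 4*lam*(κ-c)*(γ-c)) :
    lam * ((2:ℕ) * a1 ^ (2-1) * (-κ*a1+ω*a2+g*s1) + (2:ℕ) * a2 ^ (2-1) * (-ω*a1-κ*a2+g*s2))
    + ((2:ℕ) * s1 ^ (2-1) * (-γ*s1+ω*s2+g*a1*Dt) + (2:ℕ) * s2 ^ (2-1) * (-ω*s1-γ*s2+g*a2*Dt))
    + (1/4) * ((2:ℕ) * (Dt - d) ^ (2-1) * (-4*g*(a1*s1+a2*s2) - 2*γ*(Dt-d)))
    ≤ -(2*c) * (lam*(a1^2+a2^2) + (s1^2+s2^2) + (1/4)*(Dt-d)^2) := by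
  have hq : 0 < γ - c := by linarith
  have form : ∀ a s : ℝ,
      0 ≤ 2*(κ-c)*lam*a^2 + 2*(γ-c)*s^2 - 2*(g*(lam+d))*a*s := by
    intro a s
    have h := sq_nonneg (2*(γ-c)*s - g*(lam+d)*a)
    have h2 : 0 ≤ (4*lam*(κ-c)*(γ-c) - (g*(lam+d))^2)*a^2 := by
      have := sq_nonneg a; nlinarith
    have hkey : 2*(γ-c)*(2*(κ-c)*lam*a^2 + 2*(γ-c)*s^2 - 2*(g*(lam+d))*a*s)
        = (2*(γ-c)*s - g*(lam+d)*a)^2 + (4*lam*(κ-c)*(γ-c) - (g*(lam+d))^2)*a^2 := by ring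
    nlinarith
  have h1 := form a1 s1
  have h2 := form a2 s2
  have h3 := sq_nonneg (Dt - d)
  have h4 : 0 ≤ γ - c/2 := by linarith
  have h5 := mul_nonneg h4 h3
  push_cast
  nlinarith [h1, h2, h5]

private lemma lyap_deriv (κ γ g d ω lam c : ℝ) (a1 a2 s1 s2 Dt : ℝ → ℝ) (t : ℝ)
    (hc0 : 0 ≤ c) (hcκ : c < κ) (hcγ : c < γ) (hlam : 0 < lam)
    (hm : (g*(lam+d))^2 ≤ 4*lam*(κ-c)*(γ-c))
    (ha1 : HasDerivAt a1 (-κ*a1 t + ω*a2 t + g*s1 t) t)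
    (ha2 : HasDerivAt a2 (-ω*a1 t - κ*a2 t + g*s2 t) t)
    (hs1 : HasDerivAt s1 (-γ*s1 t + ω*s2 t + g*a1 t*Dt t) t)
    (hs2 : HasDerivAt s2 (-ω*s1 t - γ*s2 t + g*a2 t*Dt t) t)
    (hDd : HasDerivAt (fun τ => Dt τ - d)
      (-4*g*(a1 t*s1 t + a2 t*s2 t) - 2*γ*(Dt t - d)) t) :
    ∃ w ≤ (0:ℝ), HasDerivAt (fun τ =>
      (lam*(a1 τ^2 + a2 τ^2) + (s1 τ^2 + s2 τ^2) + (1/4)*(Dt τ - d)^2)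
        * Real.exp (2*c*τ)) w t := by
  have hexp : HasDerivAt (fun τ => Real.exp (2*c*τ)) (Real.exp (2*c*t) * (2*c)) t := by
    simpa using (((hasDerivAt_id t).const_mul (2*c)).exp)
  have hVd := ((((ha1.pow 2).add (ha2.pow 2)).const_mul lam).add
      ((hs1.pow 2).add (hs2.pow 2))).add ((hDd.pow 2).const_mul (1/4))
  have hWd := hVd.mul hexp
  refine ⟨_, ?_, hWd⟩
  have hkey := key_ineq κ γ g d ω lam c (a1 t) (a2 t) (s1 t) (s2 t) (Dt t) hc0 hcκ hcγ hlam hm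
  simp only [Pi.add_apply, Pi.pow_apply, Pi.mul_apply]
  nlinarith [mul_le_mul_of_nonneg_right hkey (Real.exp_nonneg (2*c*t))]

/-- If `g²d < κγ`, then for any global solution of the complex Lorenz system the
field `A`, the polarization `S`, and `D - d` converge to `0` exponentially fast. -/
theorem lorenz_exponential_stability (κ γ g d ω : ℝ) (A S : ℝ → ℂ) (D : ℝ → ℝ)
    (hκ : 0 < κ) (hγ : 0 < γ) (hg : g ≠ 0) (hd1 : -1 < d) (hd2 : d < 1)
    (hstab : g ^ 2 * d < κ * γ)
    (hA : ∀ t ≥ (0:ℝ),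
      HasDerivAt A (-((κ:ℂ) + (ω:ℂ) * Complex.I) * A t + (g:ℂ) * S t) t)
    (hS : ∀ t ≥ (0:ℝ),
      HasDerivAt S (-((γ:ℂ) + (ω:ℂ) * Complex.I) * S t + (g:ℂ) * A t * (D t : ℂ)) t)
    (hD : ∀ t ≥ (0:ℝ),
      HasDerivAt D (-4 * g * ((starRingEnd ℂ) (A t) * S t).re - 2 * γ * (D t - d)) t) :
    ∃ c > (0:ℝ), ∃ M : ℝ, ∀ t ≥ (0:ℝ),
      ‖A t‖ ≤ M * Real.exp (-c * t) ∧
      ‖S t‖ ≤ M * Real.exp (-c * t) ∧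
      |D t - d| ≤ M * Real.exp (-c * t) := by
  have hg2 : 0 < g ^ 2 := by positivity
  set lam : ℝ := (2*κ*γ - g^2*d)/g^2 with hlamdef
  have hlamg : g^2 * lam = 2*κ*γ - g^2*d := by
    rw [hlamdef]; field_simp
  have hlam : 0 < lam := by
    apply div_pos _ hg2
    nlinarith [mul_pos hκ hγ]
  have hlammd : 0 < lam - d := by
    have : g^2 * (lam - d) = 2*(κ*γ - g^2*d) := by rw [mul_sub, hlamg]; ring
    nlinarith
  have hlampd : 0 < lam + d := by
    have : g^2 * (lam + d) = 2*κ*γ := by rw [mul_add, hlamg]; ring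
    nlinarith [mul_pos hκ hγ]
  have heps : (g*(lam+d))^2 < 4*lam*κ*γ := by
    have h1 : g^2 * (lam + d) = 2*κ*γ := by rw [mul_add, hlamg]; ring
    have h2 : (g*(lam+d))^2 = 2*κ*γ*(lam+d) := by linear_combination (lam+d) * h1
    nlinarith [mul_pos (mul_pos hκ hγ) hlammd]
  set ε : ℝ := 4*lam*κ*γ - (g*(lam+d))^2 with hεdef
  have hε : 0 < ε := by simp only [hεdef]; linarith
  have hden : 0 < 4*lam*(κ+γ) := by positivity
  set c : ℝ := min (min κ γ) (ε/(4*lam*(κ+γ))) / 2 with hcdef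
  have hc0 : 0 < c := by
    apply div_pos _ two_pos
    exact lt_min (lt_min hκ hγ) (div_pos hε hden)
  have hcκ : c < κ := by
    have h1 : min (min κ γ) (ε/(4*lam*(κ+γ))) ≤ κ := le_trans (min_le_left _ _) (min_le_left _ _)
    rw [hcdef]; linarith
  have hcγ : c < γ := by
    have h1 : min (min κ γ) (ε/(4*lam*(κ+γ))) ≤ γ := le_trans (min_le_left _ _) (min_le_right _ _)
    rw [hcdef]; linarith
  have hcε : c * (4*lam*(κ+γ)) ≤ ε := by
    have h1 : c ≤ ε/(4*lam*(κ+γ)) := by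
      have h2 : min (min κ γ) (ε/(4*lam*(κ+γ))) ≤ ε/(4*lam*(κ+γ)) := min_le_right _ _
      have h3 : (0:ℝ) < ε/(4*lam*(κ+γ)) := div_pos hε hden
      rw [hcdef]; linarith
    exact (le_div_iff₀ hden).mp h1
  have hm : (g*(lam+d))^2 ≤ 4*lam*(κ-c)*(γ-c) := by
    have hsq : 0 ≤ 4*lam*c^2 := by positivity
    nlinarith
  clear_value c ε lam
  -- the Lyapunov function
  have hVnonneg : ∀ τ : ℝ, (0:ℝ) ≤ lam * ((A τ).re ^ 2 + (A τ).im ^ 2)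
      + ((S τ).re ^ 2 + (S τ).im ^ 2) + (1/4) * (D τ - d) ^ 2 := fun τ => by positivity
  have hW : ∀ t ≥ (0:ℝ), ∃ w ≤ (0:ℝ), HasDerivAt (fun τ =>
      (lam * ((A τ).re ^ 2 + (A τ).im ^ 2) + ((S τ).re ^ 2 + (S τ).im ^ 2)
        + (1/4) * (D τ - d) ^ 2) * Real.exp (2*c*τ)) w t := by
    intro t ht
    have ha1 : HasDerivAt (fun τ => (A τ).re)
        (-κ*(A t).re + ω*(A t).im + g*(S t).re) t := by
      have h := Complex.reCLM.hasFDerivAt.comp_hasDerivAt t (hA t ht)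
      convert h using 1
      rfl; rfl; rfl
      all_goals simp [Complex.add_re, Complex.mul_re, Complex.neg_re, Complex.add_im] <;> ring
    have ha2 : HasDerivAt (fun τ => (A τ).im)
        (-ω*(A t).re - κ*(A t).im + g*(S t).im) t := by
      have h := Complex.imCLM.hasFDerivAt.comp_hasDerivAt t (hA t ht)
      convert h using 1
      rfl; rfl; rfl
      all_goals simp [Complex.add_im, Complex.mul_im, Complex.neg_im, Complex.add_re] <;> ring
    have hs1 : HasDerivAt (fun τ => (S τ).re)
        (-γ*(S t).re + ω*(S t).im + g*(A t).re*(D t)) t := by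
      have h := Complex.reCLM.hasFDerivAt.comp_hasDerivAt t (hS t ht)
      convert h using 1
      rfl; rfl; rfl
      all_goals simp [Complex.add_re, Complex.mul_re, Complex.neg_re, Complex.add_im] <;> ring
    have hs2 : HasDerivAt (fun τ => (S τ).im)
        (-ω*(S t).re - γ*(S t).im + g*(A t).im*(D t)) t := by
      have h := Complex.imCLM.hasFDerivAt.comp_hasDerivAt t (hS t ht)
      convert h using 1
      rfl; rfl; rfl
      all_goals simp [Complex.add_im, Complex.mul_im, Complex.neg_im, Complex.add_re] <;> ring
    have hd' : HasDerivAt (fun τ => D τ - d)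
        (-4*g*((A t).re*(S t).re + (A t).im*(S t).im) - 2*γ*(D t - d)) t := by
      have h := (hD t ht).sub_const d
      convert h using 1
      rfl; rfl
      all_goals simp [Complex.mul_re] <;> ring
    exact lyap_deriv κ γ g d ω lam c (fun τ => (A τ).re) (fun τ => (A τ).im)
      (fun τ => (S τ).re) (fun τ => (S τ).im) D t hc0.le hcκ hcγ hlam hm
      ha1 ha2 hs1 hs2 hd'
  have hWanti : AntitoneOn (fun τ =>
      (lam * ((A τ).re ^ 2 + (A τ).im ^ 2) + ((S τ).re ^ 2 + (S τ).im ^ 2)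
        + (1/4) * (D τ - d) ^ 2) * Real.exp (2*c*τ)) (Set.Ici (0:ℝ)) := by
    apply antitoneOn_of_deriv_nonpos (convex_Ici 0)
    · intro τ hτ
      obtain ⟨w, _, hw⟩ := hW τ hτ
      exact hw.continuousAt.continuousWithinAt
    · rw [interior_Ici]
      intro τ hτ
      obtain ⟨w, _, hw⟩ := hW τ (le_of_lt hτ)
      exact hw.differentiableAt.differentiableWithinAt
    · rw [interior_Ici]
      intro τ hτ
      obtain ⟨w, hw0, hw⟩ := hW τ (le_of_lt hτ)
      rw [hw.deriv]; exact hw0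
  have hVbound : ∀ t ≥ (0:ℝ),
      lam * ((A t).re ^ 2 + (A t).im ^ 2) + ((S t).re ^ 2 + (S t).im ^ 2)
        + (1/4) * (D t - d) ^ 2
      ≤ (lam * ((A 0).re ^ 2 + (A 0).im ^ 2) + ((S 0).re ^ 2 + (S 0).im ^ 2)
        + (1/4) * (D 0 - d) ^ 2) * Real.exp (-(2*c)*t) := by
    intro t ht
    have h1 := hWanti (Set.self_mem_Ici) ht ht
    simp only [mul_zero, Real.exp_zero, mul_one] at h1
    have hep := Real.exp_pos (2*c*t)
    rw [show (-(2*c)*t) = -(2*c*t) by ring, Real.exp_neg, ← div_eq_mul_inv,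
      le_div_iff₀ hep]
    exact h1
  set V0 : ℝ := lam * ((A 0).re ^ 2 + (A 0).im ^ 2) + ((S 0).re ^ 2 + (S 0).im ^ 2)
      + (1/4) * (D 0 - d) ^ 2 with hV0def
  have hV0 : 0 ≤ V0 := by rw [hV0def]; exact hVnonneg 0
  clear_value V0
  have hexp2 : ∀ t : ℝ, Real.exp (-(2*c)*t) = (Real.exp (-c*t))^2 := by
    intro t
    rw [← Real.exp_nat_mul]
    congr 1
    push_cast
    ring
  refine ⟨c, hc0, max (Real.sqrt (V0 / lam)) (2 * Real.sqrt V0), fun t ht => ?_⟩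
  have hVt := hVbound t ht
  have hexp0 := Real.exp_nonneg (-c*t)
  have hsqV0 := Real.sqrt_nonneg V0
  refine ⟨?_, ?_, ?_⟩
  · have h1 : (A t).re^2 + (A t).im^2 ≤ V0 / lam * (Real.exp (-c*t))^2 := by
      rw [div_mul_eq_mul_div, le_div_iff₀ hlam, ← hexp2]
      linarith [sq_nonneg (S t).re, sq_nonneg (S t).im, sq_nonneg (D t - d), hVt]
    have h2 : ‖A t‖ = Real.sqrt ((A t).re^2 + (A t).im^2) := by
      rw [Complex.norm_def, Complex.normSq_apply]; ring_nf
    rw [h2]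
    calc Real.sqrt ((A t).re^2 + (A t).im^2)
        ≤ Real.sqrt (V0 / lam * (Real.exp (-c*t))^2) := Real.sqrt_le_sqrt h1
      _ = Real.sqrt (V0 / lam) * Real.exp (-c*t) := by
          rw [Real.sqrt_mul (div_nonneg hV0 hlam.le), Real.sqrt_sq hexp0]
      _ ≤ max (Real.sqrt (V0 / lam)) (2 * Real.sqrt V0) * Real.exp (-c*t) :=
          mul_le_mul_of_nonneg_right (le_max_left _ _) hexp0
  · have h1 : (S t).re^2 + (S t).im^2 ≤ V0 * (Real.exp (-c*t))^2 := by
      rw [← hexp2]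
      linarith [sq_nonneg (D t - d),
        mul_nonneg hlam.le (add_nonneg (sq_nonneg (A t).re) (sq_nonneg (A t).im))]
    have h2 : ‖S t‖ = Real.sqrt ((S t).re^2 + (S t).im^2) := by
      rw [Complex.norm_def, Complex.normSq_apply]; ring_nf
    rw [h2]
    calc Real.sqrt ((S t).re^2 + (S t).im^2)
        ≤ Real.sqrt (V0 * (Real.exp (-c*t))^2) := Real.sqrt_le_sqrt h1
      _ = Real.sqrt V0 * Real.exp (-c*t) := by
          rw [Real.sqrt_mul hV0, Real.sqrt_sq hexp0]
      _ ≤ max (Real.sqrt (V0 / lam)) (2 * Real.sqrt V0) * Real.exp (-c*t) := by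
          apply mul_le_mul_of_nonneg_right _ hexp0
          exact le_trans (by linarith) (le_max_right _ _)
  · have h1 : (D t - d)^2 ≤ 4 * V0 * (Real.exp (-c*t))^2 := by
      rw [← hexp2]
      linarith [sq_nonneg (S t).re, sq_nonneg (S t).im,
        mul_nonneg hlam.le (add_nonneg (sq_nonneg (A t).re) (sq_nonneg (A t).im))]
    have h2 : |D t - d| = Real.sqrt ((D t - d)^2) := (Real.sqrt_sq_eq_abs _).symm
    rw [h2]
    calc Real.sqrt ((D t - d)^2)
        ≤ Real.sqrt (4 * V0 * (Real.exp (-c*t))^2) := Real.sqrt_le_sqrt h1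
      _ = 2 * Real.sqrt V0 * Real.exp (-c*t) := by
          rw [Real.sqrt_mul (by linarith : (0:ℝ) ≤ 4 * V0), Real.sqrt_sq hexp0,
            show (4:ℝ) * V0 = 2^2 * V0 by norm_num,
            Real.sqrt_mul (by norm_num), Real.sqrt_sq (by norm_num)]
      _ ≤ max (Real.sqrt (V0 / lam)) (2 * Real.sqrt V0) * Real.exp (-c*t) :=
          mul_le_mul_of_nonneg_right (le_max_right _ _) hexp0
end
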